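/- There are no integers x, y, z, w with x + y + z + w = 1 such that (18x − 12y − 12z − 6w + 16)/35 and (−72x + 48y + 48z + 24w + 76)/35 are both non-negative integers. -/
import Mathlib


theorem stmt16 : ¬ ∃ x y z w : ℤ, x + y + z + w = 1 ∧ ((35:ℤ) ∣ (18*x - 12*y - 12*z - 6*w + 16) ∧ 0 ≤ (18*x - 12*y - 12*z - 6*w + 16)) ∧ ((35:ℤ) ∣ (-72*x + 48*y + 48*z + 24*w + 76) ∧ 0 ≤ (-72*x + 48*y + 48*z + 24*w + 76)) := by rintro ⟨x,y,z,w,h1,⟨h2,h3⟩,h4,h5⟩; omega
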